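/- Let G be a finite group and T a proper nontrivial subgroup of G that is not normal in G. Suppose g ∈ G, and H, K are subgroups of G with H contained in the normalizer N_G(T) and K contained in the normalizer N_G(T^g) of the conjugate T^g. Then HK ≠ G (as a set product). -/

import Mathlib

open scoped Pointwise

/-- If `T` is a proper nontrivial non-normal subgroup of a finite group `G`,
`H ≤ N_G(T)` and `K ≤ N_G(T^g)`, then `HK ≠ G`. -/
theorem no_factorisation_of_normalizers (G : Type*) [Group G] [Finite G]
    (T : Subgroup G) (hbot : T ≠ ⊥) (htop : T ≠ ⊤) (hnn : ¬ T.Normal)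
    (g : G) (H K : Subgroup G)
    (hH : H ≤ Subgroup.normalizer (T : Set G))
    (hK : K ≤ Subgroup.normalizer ((T.map (MulAut.conj g⁻¹).toMonoidHom : Subgroup G) : Set G)) :
    (H : Set G) * (K : Set G) ≠ Set.univ := by
  intro heq
  obtain ⟨h₀, hh₀, k₀, hk₀, hmul⟩ :
      ∃ h ∈ (H : Set G), ∃ k ∈ (K : Set G), h * k = g :=
    Set.mem_mul.mp (heq ▸ Set.mem_univ g)
  -- membership in the conjugate subgroup
  have memT' : ∀ x : G, x ∈ T.map (MulAut.conj g⁻¹).toMonoidHom ↔ g * x * g⁻¹ ∈ T := by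
    intro x
    constructor
    · rintro ⟨t, ht, rfl⟩
      have : g * ((MulAut.conj g⁻¹).toMonoidHom t) * g⁻¹ = t := by
        simp [MulAut.conj_apply]; group
      rwa [this]
    · intro hx
      exact ⟨g * x * g⁻¹, hx, by simp [MulAut.conj_apply]; group⟩
  have hh₀' : h₀ ∈ Subgroup.normalizer (T : Set G) := hH hh₀
  have hk₀' : k₀ ∈ Subgroup.normalizer ((T.map (MulAut.conj g⁻¹).toMonoidHom : Subgroup G) : Set G) := hK hk₀
  -- x ∈ T' ↔ k₀ x k₀⁻¹ ∈ T
  have e1 : ∀ x : G, x ∈ T.map (MulAut.conj g⁻¹).toMonoidHom ↔ k₀ * x * k₀⁻¹ ∈ T := by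
    intro x
    rw [memT', ← hmul]
    have : h₀ * k₀ * x * (h₀ * k₀)⁻¹ = h₀ * (k₀ * x * k₀⁻¹) * h₀⁻¹ := by group
    rw [this]
    exact (Subgroup.mem_normalizer_iff.mp hh₀' _).symm
  -- k₀ normalizes T
  have hk₀T : k₀ ∈ Subgroup.normalizer (T : Set G) := by
    rw [Subgroup.mem_normalizer_iff]
    intro y
    have h1 := (e1 (k₀⁻¹ * y * k₀)).symm
    have h2 := Subgroup.mem_normalizer_iff.mp hk₀' (k₀⁻¹ * y * k₀)
    have h3 := e1 (k₀ * (k₀⁻¹ * y * k₀) * k₀⁻¹)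
    have e4 : k₀ * (k₀⁻¹ * y * k₀) * k₀⁻¹ = y := by group
    rw [e4] at h2 h3
    have e5 : k₀ * y * k₀⁻¹ = k₀ * y * k₀⁻¹ := rfl
    calc y ∈ T ↔ k₀ * (k₀⁻¹ * y * k₀) * k₀⁻¹ ∈ T := by rw [e4]
      _ ↔ (k₀⁻¹ * y * k₀) ∈ T.map (MulAut.conj g⁻¹).toMonoidHom := h1
      _ ↔ y ∈ T.map (MulAut.conj g⁻¹).toMonoidHom := h2
      _ ↔ k₀ * y * k₀⁻¹ ∈ T := e1 y
  -- hence T' = T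
  have hTT' : ∀ x : G, x ∈ T.map (MulAut.conj g⁻¹).toMonoidHom ↔ x ∈ T := by
    intro x
    rw [e1 x]
    exact (Subgroup.mem_normalizer_iff.mp hk₀T x).symm
  -- so every element of G normalizes T
  have : T.Normal := by
    rw [← Subgroup.normalizer_eq_top_iff]
    rw [eq_top_iff]
    intro x _
    obtain ⟨h, hh, k, hk, hx⟩ :
        ∃ h ∈ (H : Set G), ∃ k ∈ (K : Set G), h * k = x :=
      Set.mem_mul.mp (heq ▸ Set.mem_univ x)
    have hkT : k ∈ Subgroup.normalizer (T : Set G) := by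
      rw [Subgroup.mem_normalizer_iff]
      intro y
      rw [← hTT' y, ← hTT' (k * y * k⁻¹)]
      exact Subgroup.mem_normalizer_iff.mp (hK hk) y
    rw [← hx]
    exact mul_mem (hH hh) hkT
  exact hnn this
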